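/- Let Ab be an abelian category with enough injectives, B a full abelian subcategory, and f : E → F a morphism in D(Ab) between complexes with cohomology in B vanishing in positive degrees, such that H⁰(f) is an isomorphism. Then H^{-1}(f) is an epimorphism if and only if the induced map Ext¹(F, I) → Ext¹(E, I) (i.e. Hom_{D(Ab)}(F, I[1]) → Hom_{D(Ab)}(E, I[1])) is injective for every object I of B. -/

import Mathlib

/-!
STATEMENT 11: in the setting of Statement 10, with `H⁰(f)` an isomorphism,
`H⁻¹(f)` is an epimorphism iff for every object `I` of the full abelian
subcategory `B` the induced map
`Ext¹(F, I) = Hom_{D(Ab)}(F, I[1]) → Hom_{D(Ab)}(E, I[1])` is injective.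
-/

open CategoryTheory Limits


open CategoryTheory Limits HomologicalComplex ZeroObject

namespace Stmt11Aux

variable {A : Type*} [Category A] [Abelian A]

variable (K : CochainComplex A ℤ)

noncomputable def tX (n : ℤ) : A :=
  if n ≤ -2 then K.X n else if n = -1 then K.cycles (-1) else 0

noncomputable def tXIso (n : ℤ) (hn : n ≤ -2) : tX K n ≅ K.X n :=
  eqToIso (if_pos hn)

noncomputable def tXIsoC : tX K (-1) ≅ K.cycles (-1) :=
  eqToIso (by rw [tX, if_neg (by omega), if_pos rfl])

lemma tX_isZero (n : ℤ) (hn : 0 ≤ n) : IsZero (tX K n) := by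
  rw [tX, if_neg (by omega), if_neg (by omega)]
  exact isZero_zero A

noncomputable def td (n m : ℤ) : tX K n ⟶ tX K m :=
  if hnm : n + 1 = m then
    (if hn : n ≤ -3 then
      (tXIso K n (by omega)).hom ≫ K.d n m ≫ (tXIso K m (by omega)).inv
     else if hn' : n = -2 then
      (tXIso K n (by omega)).hom ≫ eqToHom (by rw [hn']) ≫ K.toCycles (-2) (-1) ≫
        (tXIsoC K).inv ≫ eqToHom (congrArg (tX K) (by omega : (-1 : ℤ) = m))
     else 0)
  else 0

lemma td_eq_zero (n m : ℤ) (hn : -1 ≤ n) : td K n m = 0 := by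
  rw [td]
  split_ifs with h1 h2 h3
  · omega
  · omega
  · rfl
  · rfl

lemma td_eq₁ (n m : ℤ) (hn : n ≤ -3) (hm : n + 1 = m) :
    td K n m = (tXIso K n (by omega)).hom ≫ K.d n m ≫ (tXIso K m (by omega)).inv := by
  rw [td, dif_pos hm, dif_pos hn]

lemma td_eq₂ : td K (-2) (-1) =
    (tXIso K (-2) (by omega)).hom ≫ K.toCycles (-2) (-1) ≫ (tXIsoC K).inv := by
  rw [td, dif_pos (by omega), dif_neg (by omega), dif_pos rfl]
  simp

lemma d_toCycles : K.d (-3) (-2) ≫ K.toCycles (-2) (-1) = 0 := by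
  rw [← cancel_mono (K.iCycles (-1))]
  simp

noncomputable def t : CochainComplex A ℤ where
  X := tX K
  d := td K
  shape n m h := dif_neg (by simpa using h)
  d_comp_d' i j k hij hjk := by
    simp only [ComplexShape.up_Rel] at hij hjk
    by_cases hi : -1 ≤ i
    · rw [td_eq_zero K i j hi, zero_comp]
    · by_cases hi2 : i = -2
      · subst hi2
        obtain rfl : j = -1 := by omega
        rw [td_eq_zero K (-1) k (by omega), comp_zero]
      · by_cases hi3 : i = -3
        · subst hi3
          obtain rfl : j = -2 := by omega
          obtain rfl : k = -1 := by omega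
          rw [td_eq₁ K (-3) (-2) (by omega) (by omega), td_eq₂ K]
          simp only [Category.assoc, Iso.inv_hom_id_assoc, reassoc_of% (d_toCycles K),
            zero_comp, comp_zero]
        · rw [td_eq₁ K i j (by omega) hij, td_eq₁ K j k (by omega) hjk]
          simp [tXIso]

lemma t_d (n m : ℤ) : (t K).d n m = td K n m := rfl

noncomputable def ιf (n : ℤ) : tX K n ⟶ K.X n :=
  if hn : n ≤ -2 then (tXIso K n hn).hom
  else if hn' : n = -1 then
    eqToHom (congrArg (tX K) hn') ≫ (tXIsoC K).hom ≫ K.iCycles (-1) ≫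
      eqToHom (congrArg K.X hn'.symm)
  else 0

lemma ιf_eq_of_le (n : ℤ) (hn : n ≤ -2) : ιf K n = (tXIso K n hn).hom := dif_pos hn

lemma ιf_neg1 : ιf K (-1) = (tXIsoC K).hom ≫ K.iCycles (-1) := by
  rw [ιf, dif_neg (by omega), dif_pos rfl]
  simp

noncomputable def ι : t K ⟶ K where
  f := ιf K
  comm' i j hij := by
    simp only [ComplexShape.up_Rel] at hij
    show ιf K i ≫ K.d i j = td K i j ≫ ιf K j
    by_cases hi0 : 0 ≤ i
    · apply (tX_isZero K i hi0).eq_of_src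
    by_cases hi : i = -1
    · subst hi
      obtain rfl : j = 0 := by omega
      rw [ιf_neg1, td_eq_zero K (-1) 0 (by omega), zero_comp, Category.assoc, iCycles_d,
        comp_zero]
    by_cases hi2 : i = -2
    · subst hi2
      obtain rfl : j = -1 := by omega
      rw [td_eq₂ K, ιf_neg1, ιf_eq_of_le K (-2) (by omega)]
      simp
    have h3 : i ≤ -3 := by omega
    have h4 : j ≤ -2 := by omega
    rw [td_eq₁ K i j h3 hij, ιf_eq_of_le K i (by omega), ιf_eq_of_le K j h4]
    simp

lemma isIso_ιf (n : ℤ) (hn : n ≤ -2) : IsIso (ιf K n) := by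
  rw [ιf_eq_of_le K n hn]; infer_instance

lemma mono_ιf (n : ℤ) (hn : n ≤ -1) : Mono (ιf K n) := by
  by_cases h : n ≤ -2
  · haveI := isIso_ιf K n h; infer_instance
  · obtain rfl : n = -1 := by omega
    rw [ιf_neg1]
    infer_instance

lemma t_exactAt (n : ℤ) (hn : 0 ≤ n) : (t K).ExactAt n := by
  rw [exactAt_iff]
  exact ShortComplex.exact_of_isZero_X₂ _ (tX_isZero K n hn)

lemma t_d_neg1 : (t K).d (-1) 0 = 0 := by
  rw [t_d]; exact td_eq_zero K (-1) 0 (by omega)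

lemma isIso_t_iCycles : IsIso ((t K).iCycles (-1)) :=
  (t K).isIso_iCycles (-1) 0 (by simp) (t_d_neg1 K)

lemma cyclesMap_ι : cyclesMap (ι K) (-1) = (t K).iCycles (-1) ≫ (tXIsoC K).hom := by
  rw [← cancel_mono (K.iCycles (-1)), cyclesMap_i]
  show (t K).iCycles (-1) ≫ ιf K (-1) = _
  rw [ιf_neg1]
  exact (Category.assoc _ _ _).symm

lemma quasiIsoAt_ι_le (n : ℤ) (hn : n ≤ -2) : QuasiIsoAt (ι K) n := by
  rw [quasiIsoAt_iff]
  haveI : IsIso (((shortComplexFunctor A (ComplexShape.up ℤ) n).map (ι K)).τ₁) := by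
    exact isIso_ιf K _ (by rw [CochainComplex.prev]; omega)
  haveI : IsIso (((shortComplexFunctor A (ComplexShape.up ℤ) n).map (ι K)).τ₂) := by
    exact isIso_ιf K n hn
  haveI : Mono (((shortComplexFunctor A (ComplexShape.up ℤ) n).map (ι K)).τ₃) := by
    exact mono_ιf K _ (by rw [CochainComplex.next]; omega)
  haveI : Epi (((shortComplexFunctor A (ComplexShape.up ℤ) n).map (ι K)).τ₁) :=
    inferInstance
  exact ShortComplex.quasiIso_of_epi_of_isIso_of_mono _

lemma quasiIsoAt_ι_neg1 : QuasiIsoAt (ι K) (-1) := by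
  rw [quasiIsoAt_iff, ShortComplex.quasiIso_iff]
  apply ShortComplex.isIso_homologyMap_of_isIso_cyclesMap_of_epi
  · show IsIso (cyclesMap (ι K) (-1))
    rw [cyclesMap_ι]
    haveI := isIso_t_iCycles K
    exact IsIso.comp_isIso' inferInstance (Iso.isIso_hom (tXIsoC K))
  · show Epi (ιf K ((ComplexShape.up ℤ).prev (-1)))
    haveI : IsIso (ιf K ((ComplexShape.up ℤ).prev (-1))) :=
      isIso_ιf K _ (by rw [CochainComplex.prev]; omega)
    infer_instance

lemma quasiIso_ι (hK : ∀ n, 0 ≤ n → K.ExactAt n) : QuasiIso (ι K) where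
  quasiIsoAt n := by
    by_cases h0 : 0 ≤ n
    · rw [quasiIsoAt_iff_exactAt (ι K) n (t_exactAt K n h0)]
      exact hK n h0
    · by_cases h1 : n = -1
      · subst h1; exact quasiIsoAt_ι_neg1 K
      · exact quasiIsoAt_ι_le K n (by omega)

noncomputable def ψ : t K ⟶ (single A (ComplexShape.up ℤ) (-1)).obj (K.homology (-1)) :=
  mkHomToSingle ((tXIsoC K).hom ≫ K.homologyπ (-1)) (fun i hi => by
    obtain rfl : i = -2 := by simp only [ComplexShape.up_Rel] at hi; omega
    rw [t_d, td_eq₂ K]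
    show ((tXIso K (-2) (by omega)).hom ≫ K.toCycles (-2) (-1) ≫ (tXIsoC K).inv) ≫
      ((tXIsoC K).hom ≫ K.homologyπ (-1)) = 0
    simp)

lemma homologyMap_ψ_eq :
    homologyMap (ψ K) (-1) ≫
      (singleObjHomologySelfIso (ComplexShape.up ℤ) (-1) (K.homology (-1))).hom =
    homologyMap (ι K) (-1) := by
  rw [← cancel_epi ((t K).homologyπ (-1)), homologyπ_naturality_assoc, homologyπ_naturality,
    homologyπ_singleObjHomologySelfIso_hom, singleObjCyclesSelfIso_hom, cyclesMap_ι]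
  rw [← Category.assoc (cyclesMap (ψ K) (-1)), cyclesMap_i]
  show ((t K).iCycles (-1) ≫ (ψ K).f (-1)) ≫ _ = _
  rw [ψ, mkHomToSingle_f]
  simp
  exact (Category.assoc _ _ _).symm

lemma isIso_homologyMap_ψ (hK : ∀ n, 0 ≤ n → K.ExactAt n) :
    IsIso (homologyMap (ψ K) (-1)) := by
  haveI := quasiIso_ι K hK
  have h : homologyMap (ψ K) (-1) = homologyMap (ι K) (-1) ≫
      (singleObjHomologySelfIso (ComplexShape.up ℤ) (-1) (K.homology (-1))).inv := by
    rw [← homologyMap_ψ_eq K]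
    simp
  rw [h]
  infer_instance

lemma comp_toSingle_zero {Z : CochainComplex A ℤ} (hZ : Z.ExactAt (-1)) {I : A}
    (u : Z ⟶ (single A (ComplexShape.up ℤ) (-1)).obj I) : ι Z ≫ u = 0 := by
  apply HomologicalComplex.hom_ext
  intro n
  by_cases hn : n = -1
  · subst hn
    show (ι Z).f (-1) ≫ u.f (-1) = 0
    have hepi : Epi (Z.toCycles (-2) (-1)) := by
      rw [exactAt_iff_isZero_homology] at hZ
      exact Preadditive.epi_of_isZero_cokernel' _
        (Z.homologyIsCokernel (-2) (-1) (by simp)) hZ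
    have h5 : Z.iCycles (-1) ≫ u.f (-1) = 0 := by
      rw [← cancel_epi (Z.toCycles (-2) (-1)), comp_zero, toCycles_i_assoc,
        ← u.comm (-2) (-1)]
      simp
    show ιf Z (-1) ≫ u.f (-1) = 0
    rw [ιf_neg1, Category.assoc, h5, comp_zero]
  · apply (isZero_single_obj_X (ComplexShape.up ℤ) (-1) I n hn).eq_of_tgt

section
variable [HasDerivedCategory A]

lemma homology_exactAt_of_iso {K : CochainComplex A ℤ} {X : DerivedCategory A}
    (e : DerivedCategory.Q.obj K ≅ X) (n : ℤ)
    (hn : IsZero ((DerivedCategory.homologyFunctor A n).obj X)) : K.ExactAt n := by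
  rw [exactAt_iff_isZero_homology]
  exact IsZero.of_iso hn (((DerivedCategory.homologyFunctorFactors A n).app K).symm ≪≫
    (DerivedCategory.homologyFunctor A n).mapIso e)

lemma vanishing (X : DerivedCategory A)
    (hX : ∀ n : ℤ, -1 ≤ n → IsZero ((DerivedCategory.homologyFunctor A n).obj X))
    (I : A) (φ : X ⟶ (DerivedCategory.singleFunctor A (-1)).obj I) : φ = 0 := by
  haveI : (DerivedCategory.Q (C := A)).EssSurj :=
    Localization.essSurj _ (HomologicalComplex.quasiIso A (ComplexShape.up ℤ))
  let K := DerivedCategory.Q.objPreimage X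
  let e : DerivedCategory.Q.obj K ≅ X := DerivedCategory.Q.objObjPreimageIso X
  have hK : ∀ n, -1 ≤ n → K.ExactAt n := fun n hn => homology_exactAt_of_iso e n (hX n hn)
  suffices h : e.hom ≫ φ = 0 by
    rw [← cancel_epi e.hom, h, comp_zero]
  haveI : (HomotopyCategory.quasiIso A (ComplexShape.up ℤ)).HasRightCalculusOfFractions := by
    rw [HomotopyCategory.quasiIso_eq_subcategoryAcyclic_W]
    infer_instance
  obtain ⟨ζ, hζ⟩ := Localization.exists_rightFraction DerivedCategory.Qh
    (HomotopyCategory.quasiIso A (ComplexShape.up ℤ))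
    (show DerivedCategory.Qh.obj ((HomotopyCategory.quotient A (ComplexShape.up ℤ)).obj K) ⟶
      DerivedCategory.Qh.obj ((HomotopyCategory.quotient A (ComplexShape.up ℤ)).obj
        ((single A (ComplexShape.up ℤ) (-1)).obj I)) from
      ((DerivedCategory.quotientCompQhIso A).app K).hom ≫ e.hom ≫ φ)
  let Z : CochainComplex A ℤ := ζ.X'.as
  obtain ⟨u₀, hu₀⟩ := (HomotopyCategory.quotient A (ComplexShape.up ℤ)).map_surjective
    (show (HomotopyCategory.quotient A (ComplexShape.up ℤ)).obj Z ⟶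
      (HomotopyCategory.quotient A (ComplexShape.up ℤ)).obj
        ((single A (ComplexShape.up ℤ) (-1)).obj I) from ζ.f)
  have hZ : ∀ n : ℤ, -1 ≤ n → Z.ExactAt n := by
    intro n hn
    have h1 : IsIso ((HomotopyCategory.homologyFunctor A (ComplexShape.up ℤ) n).map ζ.s) :=
      ζ.hs n
    rw [exactAt_iff_isZero_homology]
    have h4 : IsZero (K.homology n) := by
      rw [← exactAt_iff_isZero_homology]; exact hK n hn
    exact IsZero.of_iso
      (IsZero.of_iso h4
        (asIso ((HomotopyCategory.homologyFunctor A (ComplexShape.up ℤ) n).map ζ.s)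
        ≪≫ (HomotopyCategory.homologyFunctorFactors A (ComplexShape.up ℤ) n).app K))
      ((HomotopyCategory.homologyFunctorFactors A (ComplexShape.up ℤ) n).app Z).symm
  have c0 : ι Z ≫ u₀ = 0 := comp_toSingle_zero (hZ (-1) (by omega)) u₀
  haveI : QuasiIso (ι Z) := quasiIso_ι Z (fun n hn => hZ n (by omega))
  have hq : HomotopyCategory.quasiIso A (ComplexShape.up ℤ)
      ((HomotopyCategory.quotient A (ComplexShape.up ℤ)).map (ι Z)) :=
    (HomotopyCategory.quotient_map_mem_quasiIso_iff _).mpr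
      ((HomologicalComplex.mem_quasiIso_iff _).mpr inferInstance)
  haveI hQι : IsIso (DerivedCategory.Qh.map
      ((HomotopyCategory.quotient A (ComplexShape.up ℤ)).map (ι Z))) :=
    Localization.inverts DerivedCategory.Qh (HomotopyCategory.quasiIso A (ComplexShape.up ℤ)) _ hq
  have hu0 : DerivedCategory.Qh.map ζ.f = 0 := by
    have hc : DerivedCategory.Qh.map ((HomotopyCategory.quotient A (ComplexShape.up ℤ)).map (ι Z))
        ≫ DerivedCategory.Qh.map ζ.f = 0 := by
      rw [show ζ.f = (HomotopyCategory.quotient A (ComplexShape.up ℤ)).map u₀ from hu₀.symm,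
        ← Functor.map_comp, ← Functor.map_comp, c0, Functor.map_zero, Functor.map_zero]
    refine (cancel_epi (DerivedCategory.Qh.map
      ((HomotopyCategory.quotient A (ComplexShape.up ℤ)).map (ι Z)))).1 (hc.trans comp_zero.symm)
  dsimp only at hζ
  have hz : ((DerivedCategory.quotientCompQhIso A).app K).hom ≫ e.hom ≫ φ = 0 := by
    refine hζ.trans ?_
    dsimp [MorphismProperty.RightFraction.map]
    rw [hu0, comp_zero]
    rfl
  rw [← cancel_epi ((DerivedCategory.quotientCompQhIso A).app K).hom, hz, comp_zero]

lemma realization (G : DerivedCategory A)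
    (hG : ∀ n : ℤ, 0 ≤ n → IsZero ((DerivedCategory.homologyFunctor A n).obj G)) :
    ∃ (I' : A) (_ : I' ≅ (DerivedCategory.homologyFunctor A (-1)).obj G)
      (h : G ⟶ (DerivedCategory.singleFunctor A (-1)).obj I'),
      IsIso ((DerivedCategory.homologyFunctor A (-1)).map h) := by
  haveI : (DerivedCategory.Q (C := A)).EssSurj :=
    Localization.essSurj _ (HomologicalComplex.quasiIso A (ComplexShape.up ℤ))
  let K := DerivedCategory.Q.objPreimage G
  let e : DerivedCategory.Q.obj K ≅ G := DerivedCategory.Q.objObjPreimageIso G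
  have hK : ∀ n, 0 ≤ n → K.ExactAt n := fun n hn => homology_exactAt_of_iso e n (hG n hn)
  haveI := quasiIso_ι K hK
  haveI : IsIso (DerivedCategory.Q.map (ι K)) := inferInstance
  refine ⟨K.homology (-1),
    ((DerivedCategory.homologyFunctorFactors A (-1)).app K).symm ≪≫
      (DerivedCategory.homologyFunctor A (-1)).mapIso e,
    e.inv ≫ inv (DerivedCategory.Q.map (ι K)) ≫ DerivedCategory.Q.map (ψ K) ≫
      (((SingleFunctors.evaluation _ _ (-1)).mapIso
        (DerivedCategory.singleFunctorsPostcompQIso A)).app (K.homology (-1))).inv, ?_⟩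
  haveI h1 : IsIso ((DerivedCategory.homologyFunctor A (-1)).map
      (DerivedCategory.Q.map (ψ K))) :=
    (NatIso.isIso_map_iff (DerivedCategory.homologyFunctorFactors A (-1)) (ψ K)).mpr
      (isIso_homologyMap_ψ K hK)
  simp only [Functor.map_comp]
  exact IsIso.comp_isIso' inferInstance (IsIso.comp_isIso' inferInstance
    (by
      erw [Functor.map_comp]
      exact IsIso.comp_isIso' h1
        (Iso.isIso_hom ((DerivedCategory.homologyFunctor A (-1)).mapIso
          (((SingleFunctors.evaluation _ _ (-1)).mapIso
            (DerivedCategory.singleFunctorsPostcompQIso A)).app (K.homology (-1))).symm))))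

end

end Stmt11Aux

open Stmt11Aux Pretriangulated in
theorem stmt11 {Ab : Type*} [Category Ab] [Abelian Ab] [EnoughInjectives Ab]
    [HasDerivedCategory Ab]
    (P : Ab → Prop)
    (hP_iso : ∀ {X Y : Ab}, (X ≅ Y) → P X → P Y)
    (hP_ker : ∀ {X Y : Ab} (g : X ⟶ Y), P X → P Y → P (kernel g))
    (hP_coker : ∀ {X Y : Ab} (g : X ⟶ Y), P X → P Y → P (cokernel g))
    (E F : DerivedCategory Ab) (f : E ⟶ F)
    (hE : ∀ n : ℤ, P ((DerivedCategory.homologyFunctor Ab n).obj E))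
    (hF : ∀ n : ℤ, P ((DerivedCategory.homologyFunctor Ab n).obj F))
    (hE' : ∀ n : ℤ, 0 < n → IsZero ((DerivedCategory.homologyFunctor Ab n).obj E))
    (hF' : ∀ n : ℤ, 0 < n → IsZero ((DerivedCategory.homologyFunctor Ab n).obj F))
    (hH0 : IsIso ((DerivedCategory.homologyFunctor Ab 0).map f)) :
    Epi ((DerivedCategory.homologyFunctor Ab (-1)).map f) ↔
      ∀ I : Ab, P I →
        Function.Injective
          (fun g : F ⟶ (((DerivedCategory.singleFunctor Ab 0).obj I)⟦(1 : ℤ)⟧) =>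
            f ≫ g) := by
  obtain ⟨G, g, dd, hT⟩ := Pretriangulated.distinguished_cocone_triangle f
  set T := Triangle.mk f g dd with hTdef
  have hδ : DerivedCategory.HomologySequence.δ T (-1) 0 (by norm_num) = 0 := by
    rw [← DerivedCategory.HomologySequence.mono_homologyMap_mor₁_iff T hT (-1) 0 (by norm_num)]
    haveI : IsIso ((DerivedCategory.homologyFunctor Ab 0).map T.mor₁) := hH0
    infer_instance
  have epi_g : Epi ((DerivedCategory.homologyFunctor Ab (-1)).map g) :=
    (DerivedCategory.HomologySequence.exact₃ T hT (-1) 0 (by norm_num)).epi_f hδ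
  have hGzero : ∀ n : ℤ, 0 ≤ n → IsZero ((DerivedCategory.homologyFunctor Ab n).obj G) := by
    intro n hn
    have hS := DerivedCategory.HomologySequence.exact₃ T hT n (n + 1) rfl
    have hf0 : (DerivedCategory.homologyFunctor Ab n).map T.mor₂ = 0 := by
      by_cases h0 : n = 0
      · subst h0
        haveI : IsIso ((DerivedCategory.homologyFunctor Ab 0).map T.mor₁) := hH0
        haveI : Epi ((DerivedCategory.homologyFunctor Ab 0).map T.mor₁) := inferInstance
        exact (DerivedCategory.HomologySequence.epi_homologyMap_mor₁_iff T hT 0).mp inferInstance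
      · exact (hF' n (by omega)).eq_of_src _ _
    haveI : Mono (DerivedCategory.HomologySequence.δ T n (n + 1) rfl) := hS.mono_g hf0
    exact @IsZero.of_mono _ _ _ _ _ (DerivedCategory.HomologySequence.δ T n (n + 1) rfl) this
      (hE' (n + 1) (by omega))
  constructor
  · intro hEpi I _ g₁ g₂ h12
    have h12' : f ≫ g₁ = f ≫ g₂ := h12
    have hsub : f ≫ (g₁ - g₂) = 0 := by
      rw [Preadditive.comp_sub, sub_eq_zero]
      exact h12'
    obtain ⟨w, hw⟩ := Triangle.yoneda_exact₂ T hT (g₁ - g₂) hsub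
    have hGneg1 : IsZero ((DerivedCategory.homologyFunctor Ab (-1)).obj G) := by
      have hg0 : (DerivedCategory.homologyFunctor Ab (-1)).map g = 0 :=
        (DerivedCategory.HomologySequence.epi_homologyMap_mor₁_iff T hT (-1)).mp hEpi
      rw [IsZero.iff_id_eq_zero, ← cancel_epi ((DerivedCategory.homologyFunctor Ab (-1)).map g),
        Category.comp_id, comp_zero]
      exact hg0
    have hwz : w ≫ (((DerivedCategory.singleFunctors Ab).shiftIso 1 (-1) 0
        (by norm_num)).app I).hom = 0 := by
      apply vanishing G ?_ I
      intro n hn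
      by_cases h1 : n = -1
      · subst h1; exact hGneg1
      · exact hGzero n (by omega)
    have hw0 : w = 0 := by
      rw [← cancel_mono ((((DerivedCategory.singleFunctors Ab).shiftIso 1 (-1) 0
        (by norm_num)).app I).hom), zero_comp]
      exact hwz
    have : g₁ - g₂ = 0 := by rw [hw, hw0, comp_zero]; rfl
    rw [sub_eq_zero] at this
    exact this
  · intro hinj
    obtain ⟨I', eI, h, hIso⟩ := realization G hGzero
    have hPH : P ((DerivedCategory.homologyFunctor Ab (-1)).obj G) := by
      have hS := DerivedCategory.HomologySequence.exact₂ T hT (-1)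
      haveI : Epi ((ShortComplex.mk ((DerivedCategory.homologyFunctor Ab (-1)).map T.mor₁)
          ((DerivedCategory.homologyFunctor Ab (-1)).map T.mor₂) (by
            rw [← Functor.map_comp, comp_distTriang_mor_zero₁₂ _ hT, Functor.map_zero])).g) :=
        epi_g
      have i1 := IsColimit.coconePointUniqueUpToIso
        (cokernelIsCokernel ((DerivedCategory.homologyFunctor Ab (-1)).map f)) hS.gIsCokernel
      exact hP_iso i1 (hP_coker _ (hE (-1)) (hF (-1)))
    have hPI' : P I' := hP_iso eI.symm hPH
    set σ := ((DerivedCategory.singleFunctors Ab).shiftIso 1 (-1) 0 (by norm_num)).app I' with hσ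
    have h00 : f ≫ g = 0 := comp_distTriang_mor_zero₁₂ T hT
    have h0 : f ≫ (g ≫ h ≫ σ.inv) = 0 := by
      rw [← Category.assoc, h00, zero_comp]
    have hz : g ≫ h ≫ σ.inv = 0 := by
      apply hinj I' hPI'
      show f ≫ (g ≫ h ≫ σ.inv) = f ≫ 0
      rw [h0, comp_zero]
    have hgh : g ≫ h = 0 := by
      have h2 : (g ≫ h ≫ σ.inv) ≫ σ.hom = 0 := by rw [hz, zero_comp]
      simpa using h2
    have hg0 : (DerivedCategory.homologyFunctor Ab (-1)).map g = 0 := by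
      haveI := hIso
      rw [← cancel_mono ((DerivedCategory.homologyFunctor Ab (-1)).map h), zero_comp,
        ← Functor.map_comp, hgh, Functor.map_zero]
    exact (DerivedCategory.HomologySequence.epi_homologyMap_mor₁_iff T hT (-1)).mpr hg0
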